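/- Euler's pentagonal number theorem: for |x| < 1, ∏_{n=1}^{∞} (1 - xⁿ) = ∑_{n=-∞}^{∞} (-1)ⁿ x^{n(3n+1)/2}. -/

import Mathlib

open Finset Filter Complex Topology

namespace EulerPentAux

/-- triangular numbers -/
def tri : ℕ → ℕ
  | 0 => 0
  | n + 1 => tri n + n + 1

lemma two_tri (n : ℕ) : 2 * tri n = n * (n + 1) := by
  induction n with
  | zero => rfl
  | succ n ih => show 2 * (tri n + n + 1) = _ ; nlinarith [ih]

lemma tri_ge (n : ℕ) : n ≤ tri n := by
  induction n with
  | zero => simp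
  | succ n ih => show _ ≤ tri n + n + 1 ; omega

/-- partial product of `(1 - x^i)` for `s < i ≤ n` -/
noncomputable def Q (x : ℂ) (s n : ℕ) : ℂ := ∏ i ∈ Ioc s n, (1 - x ^ i)

lemma Q_self (x : ℂ) (n : ℕ) : Q x n n = 1 := by simp [Q]

lemma Q_succ_top (x : ℂ) {s n : ℕ} (h : s ≤ n) :
    Q x s (n + 1) = Q x s n * (1 - x ^ (n + 1)) :=
  Finset.prod_Ioc_succ_top h _

lemma Q_cons (x : ℂ) {s n : ℕ} (h : s + 1 ≤ n) :
    Q x s n = (1 - x ^ (s + 1)) * Q x (s + 1) n := by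
  have h1 : (∏ i ∈ Ioc s (s + 1), (1 - x ^ i)) * ∏ i ∈ Ioc (s + 1) n, (1 - x ^ i)
      = ∏ i ∈ Ioc s n, (1 - x ^ i) :=
    Finset.prod_Ioc_consecutive _ (Nat.le_succ s) h
  have h2 : Ioc s (s + 1) = {s + 1} := by
    ext i; simp [Nat.lt_succ_iff]
  rw [h2, Finset.prod_singleton] at h1
  rw [Q, ← h1, Q]

/-- terms of Shanks' sum -/
noncomputable def A (x : ℂ) (n s : ℕ) : ℂ := (-1) ^ s * Q x s n * x ^ (s * n + tri s)

noncomputable def G (x : ℂ) (n : ℕ) : ℂ := ∑ s ∈ range (n + 1), A x n s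

lemma A_succ_n (x : ℂ) {n s : ℕ} (h : s ≤ n) :
    A x (n + 1) s = A x n s * (x ^ s * (1 - x ^ (n + 1))) := by
  rw [A, A, Q_succ_top x h]
  have he : s * (n + 1) + tri s = (s * n + tri s) + s := by ring
  rw [he, pow_add]
  ring

lemma A_shift (x : ℂ) {n s : ℕ} (h : s + 1 ≤ n) :
    A x n (s + 1) * (x ^ (s + 1) - 1) = A x n s * x ^ (n + s + 1) := by
  rw [A, A, Q_cons x h]
  have he : (s + 1) * n + tri (s + 1) = (s * n + tri s) + (n + s + 1) := by
    show (s + 1) * n + (tri s + s + 1) = _ ; ring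
  rw [he, pow_add, pow_succ]
  ring

lemma G_succ (x : ℂ) (n : ℕ) :
    G x (n + 1) = G x n
      + (-1) ^ (n + 1) * (x ^ ((n + 1) * (n + 1) + tri (n + 1))
          + x ^ ((n + 1) * (n + 1) + tri n)) := by
  have h1 : G x (n + 1)
      = (∑ s ∈ range (n + 1), A x n s * (x ^ s * (1 - x ^ (n + 1))))
        + (-1) ^ (n + 1) * x ^ ((n + 1) * (n + 1) + tri (n + 1)) := by
    rw [G, Finset.sum_range_succ]
    congr 1
    · exact Finset.sum_congr rfl fun s hs => A_succ_n x (Nat.lt_succ_iff.mp (mem_range.mp hs))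
    · rw [A, Q_self]; ring
  have h2 : ∀ s, A x n s * (x ^ s * (1 - x ^ (n + 1)))
      = A x n s + (A x n s * (x ^ s - 1) - A x n s * x ^ (s + (n + 1))) := by
    intro s; rw [pow_add]; ring
  have h3 : (∑ s ∈ range (n + 1), A x n s * (x ^ s * (1 - x ^ (n + 1))))
      = G x n + ((∑ s ∈ range (n + 1), A x n s * (x ^ s - 1))
          - ∑ s ∈ range (n + 1), A x n s * x ^ (s + (n + 1))) := by
    rw [G, ← Finset.sum_sub_distrib, ← Finset.sum_add_distrib]
    exact Finset.sum_congr rfl fun s _ => h2 s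
  have h4 : (∑ s ∈ range (n + 1), A x n s * (x ^ s - 1))
      = ∑ s ∈ range n, A x n s * x ^ (n + s + 1) := by
    rw [Finset.sum_range_succ']
    simp only [pow_zero, sub_self, mul_zero, add_zero]
    exact Finset.sum_congr rfl fun s hs =>
      A_shift x (Nat.succ_le_of_lt (mem_range.mp hs))
  have h5 : (∑ s ∈ range (n + 1), A x n s * x ^ (s + (n + 1)))
      = (∑ s ∈ range n, A x n s * x ^ (n + s + 1)) + A x n n * x ^ (n + n + 1) := by
    rw [Finset.sum_range_succ]
    congr 1
    · exact Finset.sum_congr rfl fun s _ => by ring_nf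

  have h6 : A x n n * x ^ (n + n + 1) = (-1) ^ n * x ^ ((n + 1) * (n + 1) + tri n) := by
    rw [A, Q_self]
    have : n * n + tri n + (n + n + 1) = (n + 1) * (n + 1) + tri n := by ring
    rw [← this, pow_add]; ring
  rw [h1, h3, h4, h5, h6]
  have hs : (-1 : ℂ) ^ (n + 1) = -(-1) ^ n := by rw [pow_succ]; ring
  rw [hs]; ring

/-- Shanks' identity. -/
lemma G_eq (x : ℂ) (n : ℕ) :
    G x n = (∑ r ∈ range (n + 1), (-1) ^ r * x ^ (r * r + tri r))
      + ∑ r ∈ range n, (-1) ^ (r + 1) * x ^ ((r + 1) * (r + 1) + tri r) := by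
  induction n with
  | zero => simp [G, A, Q_self, tri]
  | succ n ih =>
      rw [G_succ, ih]
      simp only [Finset.sum_range_succ]
      ring


/-- terms for nonnegative indices -/
noncomputable def fp (x : ℂ) (r : ℕ) : ℂ := (-1) ^ r * x ^ (r * r + tri r)
/-- terms for negative indices -/
noncomputable def fm (x : ℂ) (r : ℕ) : ℂ := (-1) ^ (r + 1) * x ^ ((r + 1) * (r + 1) + tri r)

lemma G_eq' (x : ℂ) (n : ℕ) :
    G x n = (∑ r ∈ range (n + 1), fp x r) + ∑ r ∈ range n, fm x r := by
  rw [G_eq]; rfl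

lemma norm_fp (x : ℂ) (r : ℕ) : ‖fp x r‖ = ‖x‖ ^ (r * r + tri r) := by
  simp [fp, norm_mul, norm_pow]

lemma norm_fm (x : ℂ) (r : ℕ) : ‖fm x r‖ = ‖x‖ ^ ((r + 1) * (r + 1) + tri r) := by
  simp [fm, norm_mul, norm_pow]

variable {x : ℂ}

lemma summable_fp (hx : ‖x‖ < 1) : Summable (fp x) := by
  apply Summable.of_norm_bounded (g := fun r => ‖x‖ ^ r)
    (summable_geometric_of_lt_one (norm_nonneg x) hx)
  intro r
  rw [norm_fp]
  exact pow_le_pow_of_le_one (norm_nonneg x) hx.le ((tri_ge r).trans (Nat.le_add_left _ _))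

lemma summable_fm (hx : ‖x‖ < 1) : Summable (fm x) := by
  apply Summable.of_norm_bounded (g := fun r => ‖x‖ ^ r)
    (summable_geometric_of_lt_one (norm_nonneg x) hx)
  intro r
  rw [norm_fm]
  exact pow_le_pow_of_le_one (norm_nonneg x) hx.le ((tri_ge r).trans (Nat.le_add_left _ _))

lemma sum_geom_le (hx : ‖x‖ < 1) (s : Finset ℕ) : ∑ i ∈ s, ‖x‖ ^ i ≤ (1 - ‖x‖)⁻¹ := by
  calc ∑ i ∈ s, ‖x‖ ^ i ≤ ∑' i : ℕ, ‖x‖ ^ i :=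
        Summable.sum_le_tsum s (fun i _ => pow_nonneg (norm_nonneg x) i)
          (summable_geometric_of_lt_one (norm_nonneg x) hx)
    _ = (1 - ‖x‖)⁻¹ := tsum_geometric_of_lt_one (norm_nonneg x) hx

lemma normQ_le (hx : ‖x‖ < 1) (s n : ℕ) : ‖Q x s n‖ ≤ Real.exp (1 - ‖x‖)⁻¹ := by
  rw [Q, norm_prod]
  calc ∏ i ∈ Ioc s n, ‖1 - x ^ i‖ ≤ ∏ i ∈ Ioc s n, Real.exp (‖x‖ ^ i) := by
        apply Finset.prod_le_prod (fun i _ => norm_nonneg _)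
        intro i _
        calc ‖1 - x ^ i‖ ≤ ‖(1 : ℂ)‖ + ‖x ^ i‖ := norm_sub_le _ _
          _ = ‖x‖ ^ i + 1 := by rw [norm_one, norm_pow]; ring
          _ ≤ Real.exp (‖x‖ ^ i) := Real.add_one_le_exp _
    _ = Real.exp (∑ i ∈ Ioc s n, ‖x‖ ^ i) := (Real.exp_sum _ _).symm
    _ ≤ Real.exp (1 - ‖x‖)⁻¹ := Real.exp_le_exp.mpr (sum_geom_le hx _)

lemma rem_bound (hx : ‖x‖ < 1) (n : ℕ) :
    ‖Q x 0 n - G x n‖ ≤ Real.exp (1 - ‖x‖)⁻¹ * (1 - ‖x‖)⁻¹ * ‖x‖ ^ n := by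
  have hA0 : A x n 0 = Q x 0 n := by simp [A, tri]
  have hG : G x n = (∑ s ∈ range n, A x n (s + 1)) + Q x 0 n := by
    rw [G, Finset.sum_range_succ', hA0]
  have h1 : Q x 0 n - G x n = -∑ s ∈ range n, A x n (s + 1) := by rw [hG]; ring
  rw [h1, norm_neg]
  have hM0 : (0 : ℝ) ≤ Real.exp (1 - ‖x‖)⁻¹ := (Real.exp_pos _).le
  calc ‖∑ s ∈ range n, A x n (s + 1)‖
      ≤ ∑ s ∈ range n, ‖A x n (s + 1)‖ := norm_sum_le _ _
    _ ≤ ∑ s ∈ range n, Real.exp (1 - ‖x‖)⁻¹ * (‖x‖ ^ n * ‖x‖ ^ (s + 1)) := by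
        apply Finset.sum_le_sum
        intro s _
        have h2 : ‖A x n (s + 1)‖ = ‖Q x (s + 1) n‖ * ‖x‖ ^ ((s + 1) * n + tri (s + 1)) := by
          simp [A, norm_mul, norm_pow]
        rw [h2, ← pow_add]
        apply mul_le_mul (normQ_le hx _ _) _ (pow_nonneg (norm_nonneg x) _) hM0
        apply pow_le_pow_of_le_one (norm_nonneg x) hx.le
        have hb1 : n ≤ (s + 1) * n := Nat.le_mul_of_pos_left n (Nat.succ_pos s)
        have hb2 : s + 1 ≤ tri (s + 1) := tri_ge (s + 1)
        omega
    _ = Real.exp (1 - ‖x‖)⁻¹ * ‖x‖ ^ n * ∑ s ∈ range n, ‖x‖ ^ (s + 1) := by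
        rw [Finset.mul_sum]
        exact Finset.sum_congr rfl fun s _ => by ring
    _ ≤ Real.exp (1 - ‖x‖)⁻¹ * ‖x‖ ^ n * (1 - ‖x‖)⁻¹ := by
        apply mul_le_mul_of_nonneg_left _ (mul_nonneg hM0 (pow_nonneg (norm_nonneg x) n))
        calc ∑ s ∈ range n, ‖x‖ ^ (s + 1) ≤ ∑ s ∈ range n, ‖x‖ ^ s :=
              Finset.sum_le_sum fun s _ =>
                pow_le_pow_of_le_one (norm_nonneg x) hx.le (Nat.le_succ s)
          _ ≤ (1 - ‖x‖)⁻¹ := sum_geom_le hx _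
    _ = Real.exp (1 - ‖x‖)⁻¹ * (1 - ‖x‖)⁻¹ * ‖x‖ ^ n := by ring

end EulerPentAux

open EulerPentAux

/-- Euler's pentagonal number theorem: for `|x| < 1`,
`∏_{n=1}^{∞} (1 - xⁿ) = ∑_{n∈ℤ} (-1)ⁿ x^{n(3n+1)/2}`. -/
theorem euler_pentagonal (x : ℂ) (hx : ‖x‖ < 1) :
    ∏' n : ℕ, (1 - x ^ (n + 1))
      = ∑' n : ℤ, (-1 : ℂ) ^ n * x ^ (n * (3 * n + 1) / 2) := by
  have hx' : ‖x‖ < 1 := hx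
  have hsfp := summable_fp hx'
  have hsfm := summable_fm hx'
  set L : ℂ := (∑' r : ℕ, fp x r) + ∑' r : ℕ, fm x r with hL
  -- the Shanks sums tend to L
  have hG1 : Tendsto (fun n : ℕ => ∑ r ∈ range (n + 1), fp x r) atTop
      (𝓝 (∑' r : ℕ, fp x r)) :=
    hsfp.hasSum.tendsto_sum_nat.comp (tendsto_add_atTop_nat 1)
  have hG2 : Tendsto (fun n : ℕ => ∑ r ∈ range n, fm x r) atTop
      (𝓝 (∑' r : ℕ, fm x r)) := hsfm.hasSum.tendsto_sum_nat
  have hGlim : Tendsto (fun n => G x n) atTop (𝓝 L) :=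
    (hG1.add hG2).congr fun n => (G_eq' x n).symm
  -- the partial products tend to L
  have hrem : Tendsto (fun n => Q x 0 n - G x n) atTop (𝓝 0) := by
    apply squeeze_zero_norm (rem_bound hx')
    have := (tendsto_pow_atTop_nhds_zero_of_lt_one (norm_nonneg x) hx').const_mul
      (Real.exp (1 - ‖x‖)⁻¹ * (1 - ‖x‖)⁻¹)
    simpa using this
  have hQlim : Tendsto (fun n => Q x 0 n) atTop (𝓝 L) := by
    have := hrem.add hGlim
    simpa using this
  -- multipliability of the product
  have hne : ∀ n : ℕ, (1 : ℂ) - x ^ (n + 1) ≠ 0 := by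
    intro n h
    have h1 : x ^ (n + 1) = 1 := by linear_combination -h
    have h2 : ‖x ^ (n + 1)‖ < 1 := by
      rw [norm_pow]
      exact pow_lt_one₀ (norm_nonneg x) hx' (Nat.succ_ne_zero n)
    rw [h1, norm_one] at h2
    exact lt_irrefl _ h2
  have hlog : Summable fun n : ℕ => Complex.log (1 - x ^ (n + 1)) := by
    apply Summable.of_norm_bounded_eventually (g := fun n => 3 / 2 * ‖x‖ ^ (n + 1))
    · apply ((summable_geometric_of_lt_one (norm_nonneg x) hx').mul_left
        (3 / 2 * ‖x‖)).congr
      intro n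
      rw [pow_succ]; ring
    · rw [Nat.cofinite_eq_atTop]
      have hpow : Tendsto (fun n : ℕ => ‖x‖ ^ (n + 1)) atTop (𝓝 0) :=
        (tendsto_pow_atTop_nhds_zero_of_lt_one (norm_nonneg x) hx').comp
          (tendsto_add_atTop_nat 1)
      have hev : ∀ᶠ n : ℕ in atTop, ‖x‖ ^ (n + 1) ≤ 1 / 2 :=
        (hpow.eventually_lt_const (by norm_num : (0:ℝ) < 1/2)).mono fun n hn => hn.le
      filter_upwards [hev] with n hn
      have h3 : ‖-x ^ (n + 1)‖ ≤ 1 / 2 := by rwa [norm_neg, norm_pow]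
      have := Complex.norm_log_one_add_half_le_self h3
      rw [norm_neg, norm_pow] at this
      calc ‖Complex.log (1 - x ^ (n + 1))‖
          = ‖Complex.log (1 + -x ^ (n + 1))‖ := by rw [sub_eq_add_neg]
        _ ≤ 3 / 2 * ‖x‖ ^ (n + 1) := this
  have hmult : Multipliable fun n : ℕ => 1 - x ^ (n + 1) :=
    Complex.multipliable_of_summable_log hlog
  have hprodQ : ∀ N, (∏ i ∈ range N, (1 - x ^ (i + 1))) = Q x 0 N := by
    intro N
    induction N with
    | zero => simp [Q]
    | succ N ih => rw [Finset.prod_range_succ, ih, Q_succ_top x (Nat.zero_le N)]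
  have hPlim : Tendsto (fun N => Q x 0 N) atTop (𝓝 (∏' n : ℕ, (1 - x ^ (n + 1)))) :=
    hmult.hasProd.tendsto_prod_nat.congr hprodQ
  have hprod : (∏' n : ℕ, (1 - x ^ (n + 1))) = L := tendsto_nhds_unique hPlim hQlim
  rw [hprod]
  -- identify the bilateral sum
  have hfun : ∀ n : ℤ, (-1 : ℂ) ^ n * x ^ (n * (3 * n + 1) / 2) = Int.rec (fp x) (fm x) n := by
    intro n
    have htri : ∀ r : ℕ, (2 : ℤ) * ((tri r : ℕ) : ℤ) = (r : ℤ) * ((r : ℤ) + 1) := fun r => by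
      exact_mod_cast two_tri r
    cases n with
    | ofNat r =>
        simp only [Int.ofNat_eq_natCast]
        have h2 : (r : ℤ) * (3 * (r : ℤ) + 1) = 2 * (((r * r + tri r : ℕ)) : ℤ) := by
          push_cast
          linear_combination -htri r
        rw [h2, Int.mul_ediv_cancel_left _ two_ne_zero, zpow_natCast, zpow_natCast]
        rfl
    | negSucc r =>
        have h2 : Int.negSucc r * (3 * Int.negSucc r + 1)
            = 2 * ((((r + 1) * (r + 1) + tri r : ℕ)) : ℤ) := by
          rw [Int.negSucc_eq]
          push_cast
          linear_combination -htri r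
        rw [h2, Int.mul_ediv_cancel_left _ two_ne_zero, zpow_natCast, zpow_negSucc]
        show ((-1 : ℂ) ^ (r + 1))⁻¹ * _ = fm x r
        rw [← inv_pow, inv_neg, inv_one]
        rfl
  rw [tsum_congr hfun, tsum_int_rec hsfp hsfm]
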